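/- Let (S_ξ)_{ξ∈Ξ} be a nondegenerate family of nonzero symmetric gauges in ℝ^N. Then for every nonzero y ∈ ℝ^N one has h_{S_ξ}(y) > 0 for every ξ ∈ Ξ, and the set S_y := ⋂_{ξ∈Ξ} (1/h_{S_ξ}(y))·S_ξ is absorbing: for every z ∈ ℝ^N there exists α > 0 with α·z ∈ S_y. -/

import Mathlib

open Pointwise

/-- The support function `h_K(x) = sup{⟨x, y⟩ : y ∈ K}` of `K ⊆ ℝ^N`. -/
noncomputable def suppFn {N : ℕ} (K : Set (EuclideanSpace ℝ (Fin N)))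
    (x : EuclideanSpace ℝ (Fin N)) : ℝ :=
  sSup ((fun y => (inner ℝ x y : ℝ)) '' K)

/-- A gauge in `ℝ^N`: a compact convex set containing the origin. -/
def IsGauge {N : ℕ} (K : Set (EuclideanSpace ℝ (Fin N))) : Prop :=
  IsCompact K ∧ Convex ℝ K ∧ (0 : EuclideanSpace ℝ (Fin N)) ∈ K

/-- A family of gauges is nondegenerate if `sup_ξ ‖A‖_{S_ξ} < +∞` for every
linear operator `A` on `ℝ^N`, i.e. there is `C` such that for each `ξ` and each
`x ∈ S ξ` the gauge value `‖A x‖_{S ξ} = inf{β > 0 : A x ∈ β • S ξ}` is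
attained below `C`. -/
def Nondegenerate {N : ℕ} {Ξ : Type*}
    (S : Ξ → Set (EuclideanSpace ℝ (Fin N))) : Prop :=
  ∀ A : EuclideanSpace ℝ (Fin N) →ₗ[ℝ] EuclideanSpace ℝ (Fin N),
    ∃ C : ℝ, ∀ ξ, ∀ x ∈ S ξ, ∃ β : ℝ, 0 < β ∧ β ≤ C ∧ A x ∈ β • S ξ

/-- Closedness of a collection of (nonempty compact) subsets of `ℝ^N` in the
topology of the Hausdorff metric. -/
def IsHausdorffClosed {N : ℕ} (C : Set (Set (EuclideanSpace ℝ (Fin N)))) : Prop :=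
  IsClosed {K : TopologicalSpace.NonemptyCompacts (EuclideanSpace ℝ (Fin N)) |
    (K : Set (EuclideanSpace ℝ (Fin N))) ∈ C}

/-- `π↑(F)`: the least Hausdorff-closed cone of gauges containing `F` that is
closed under the join `K ∨ L = conv (K ∪ L)`. -/
def piUp {N : ℕ} (F : Set (Set (EuclideanSpace ℝ (Fin N)))) :
    Set (Set (EuclideanSpace ℝ (Fin N))) :=
  ⋂₀ {C | (∀ K ∈ C, IsGauge K) ∧ IsHausdorffClosed C ∧ F ⊆ C ∧
      (∀ K ∈ C, ∀ L ∈ C, K + L ∈ C) ∧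
      (∀ K ∈ C, ∀ α : ℝ, 0 ≤ α → α • K ∈ C) ∧
      (∀ K ∈ C, ∀ L ∈ C, convexHull ℝ (K ∪ L) ∈ C)}

/-- `π↓(F)`: the least Hausdorff-closed cone of gauges containing `F` that is
closed under the meet `K ∧ L = K ∩ L`. -/
def piDown {N : ℕ} (F : Set (Set (EuclideanSpace ℝ (Fin N)))) :
    Set (Set (EuclideanSpace ℝ (Fin N))) :=
  ⋂₀ {C | (∀ K ∈ C, IsGauge K) ∧ IsHausdorffClosed C ∧ F ⊆ C ∧
      (∀ K ∈ C, ∀ L ∈ C, K + L ∈ C) ∧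
      (∀ K ∈ C, ∀ α : ℝ, 0 ≤ α → α • K ∈ C) ∧
      (∀ K ∈ C, ∀ L ∈ C, K ∩ L ∈ C)}

/-- `π(F)`: the least Hausdorff-closed cone of gauges containing `F` that is
closed under both the join and the meet. -/
def piBoth {N : ℕ} (F : Set (Set (EuclideanSpace ℝ (Fin N)))) :
    Set (Set (EuclideanSpace ℝ (Fin N))) :=
  ⋂₀ {C | (∀ K ∈ C, IsGauge K) ∧ IsHausdorffClosed C ∧ F ⊆ C ∧
      (∀ K ∈ C, ∀ L ∈ C, K + L ∈ C) ∧
      (∀ K ∈ C, ∀ α : ℝ, 0 ≤ α → α • K ∈ C) ∧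
      (∀ K ∈ C, ∀ L ∈ C, convexHull ℝ (K ∪ L) ∈ C) ∧
      (∀ K ∈ C, ∀ L ∈ C, K ∩ L ∈ C)}

/-- For a nondegenerate family of nonzero symmetric gauges `(S ξ)` in `ℝ^N` and
every nonzero `y`, one has `h_{S ξ}(y) > 0` for every `ξ`, and the set
`S_y = ⋂_ξ (1/h_{S ξ}(y)) • S ξ` is absorbing. -/
theorem nondegenerate_inf_absorbing {N : ℕ} {Ξ : Type*}
    (S : Ξ → Set (EuclideanSpace ℝ (Fin N)))
    (hg : ∀ ξ, IsGauge (S ξ))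
    (hnz : ∀ ξ, S ξ ≠ {0})
    (hsymm : ∀ ξ, S ξ = -S ξ)
    (hnd : Nondegenerate S)
    (y : EuclideanSpace ℝ (Fin N)) (hy : y ≠ 0) :
    (∀ ξ, 0 < suppFn (S ξ) y) ∧
    (∀ z : EuclideanSpace ℝ (Fin N), ∃ α : ℝ, 0 < α ∧
      α • z ∈ ⋂ ξ, (1 / suppFn (S ξ) y) • S ξ) := by
  classical
  have hpos : ∀ ξ, 0 < suppFn (S ξ) y := by
    intro ξ
    obtain ⟨hcpt, hconv, h0⟩ := hg ξ
    have hf : Continuous (fun w : EuclideanSpace ℝ (Fin N) => (inner ℝ y w : ℝ)) :=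
      continuous_const.inner continuous_id
    have hbdd : BddAbove ((fun w => (inner ℝ y w : ℝ)) '' S ξ) :=
      (hcpt.image hf).bddAbove
    have hge : 0 ≤ suppFn (S ξ) y := by
      refine le_csSup hbdd ⟨0, h0, by simp⟩
    rcases lt_or_eq_of_le hge with h | h
    · exact h
    exfalso
    -- all inner products are zero
    have hzero : ∀ x ∈ S ξ, (inner ℝ y x : ℝ) = 0 := by
      intro x hx
      have hle : (inner ℝ y x : ℝ) ≤ 0 :=
        le_trans (le_csSup hbdd ⟨x, hx, rfl⟩) h.ge
      have hxneg : -x ∈ S ξ := by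
        rw [hsymm ξ]; exact Set.neg_mem_neg.mpr hx
      have hle' : (inner ℝ y (-x) : ℝ) ≤ 0 :=
        le_trans (le_csSup hbdd ⟨-x, hxneg, rfl⟩) h.ge
      rw [inner_neg_right] at hle'
      linarith
    obtain ⟨x₀, hx₀, hx₀ne⟩ : ∃ x ∈ S ξ, x ≠ 0 := by
      by_contra hc
      push_neg at hc
      apply hnz ξ
      apply Set.eq_singleton_iff_unique_mem.mpr ⟨h0, hc⟩
    obtain ⟨i, hi⟩ : ∃ i, x₀ i ≠ 0 := by
      by_contra hc
      push_neg at hc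
      exact hx₀ne (by ext i; exact hc i)
    set A : EuclideanSpace ℝ (Fin N) →ₗ[ℝ] EuclideanSpace ℝ (Fin N) :=
      { toFun := fun v => v i • y
        map_add' := by intro v w; simp [add_smul]
        map_smul' := by intro c v; simp [smul_smul] }
    obtain ⟨C, hC⟩ := hnd A
    obtain ⟨β, hβ0, _, hmem⟩ := hC ξ x₀ hx₀
    have hA : A x₀ = x₀ i • y := rfl
    rw [hA, Set.mem_smul_set_iff_inv_smul_mem₀ (ne_of_gt hβ0)] at hmem
    have := hzero _ hmem
    rw [inner_smul_right, inner_smul_right, real_inner_self_eq_norm_sq,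
      mul_eq_zero, mul_eq_zero] at this
    have hyn : ‖y‖ ≠ 0 := norm_ne_zero_iff.mpr hy
    rcases this with h1 | h1 | h1
    · exact (inv_ne_zero (ne_of_gt hβ0)) h1
    · exact hi h1
    · exact hyn (pow_eq_zero_iff (by norm_num) |>.mp h1)
  refine ⟨hpos, ?_⟩
  intro z
  set A : EuclideanSpace ℝ (Fin N) →ₗ[ℝ] EuclideanSpace ℝ (Fin N) :=
    { toFun := fun v => (inner ℝ y v : ℝ) • z
      map_add' := by intro v w; simp [inner_add_right, add_smul]
      map_smul' := by intro c v; simp [inner_smul_right, smul_smul] }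
  obtain ⟨C, hC⟩ := hnd A
  set M : ℝ := max C 1 with hM
  have hM0 : 0 < M := lt_of_lt_of_le one_pos (le_max_right _ _)
  refine ⟨M⁻¹, inv_pos.mpr hM0, ?_⟩
  rw [Set.mem_iInter]
  intro ξ
  obtain ⟨hcpt, hconv, h0⟩ := hg ξ
  set h : ℝ := suppFn (S ξ) y with hh
  have hhpos : 0 < h := hpos ξ
  have hf : Continuous (fun w : EuclideanSpace ℝ (Fin N) => (inner ℝ y w : ℝ)) :=
    continuous_const.inner continuous_id
  -- the sup is attained
  have hmem : h ∈ (fun w => (inner ℝ y w : ℝ)) '' S ξ :=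
    (hcpt.image hf).sSup_mem ((Set.nonempty_of_mem h0).image _)
  obtain ⟨x₀, hx₀, hx₀eq⟩ := hmem
  obtain ⟨β, hβ0, hβC, hmemβ⟩ := hC ξ x₀ hx₀
  have hA : A x₀ = h • z := congrArg (· • z) hx₀eq
  rw [hA, Set.mem_smul_set_iff_inv_smul_mem₀ (ne_of_gt hβ0)] at hmemβ
  -- hmemβ : β⁻¹ • h • z ∈ S ξ
  have ht : M⁻¹ * β ∈ Set.Icc (0:ℝ) 1 := by
    constructor
    · positivity
    · rw [inv_mul_le_iff₀ hM0, mul_one]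
      exact hβC.trans (le_max_left _ _)
  have hin : (M⁻¹ * β) • (β⁻¹ • h • z) ∈ S ξ :=
    hconv.smul_mem_of_zero_mem h0 hmemβ ht
  have heq : (M⁻¹ * β) • (β⁻¹ • h • z) = (M⁻¹ * h) • z := by
    rw [smul_smul, smul_smul]
    congr 1
    field_simp
  rw [heq] at hin
  rw [Set.mem_smul_set_iff_inv_smul_mem₀ (by positivity : (1:ℝ)/h ≠ 0)]
  have : (1 / h : ℝ)⁻¹ • M⁻¹ • z = (M⁻¹ * h) • z := by
    rw [one_div, inv_inv, smul_smul]; ring_nf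
  rw [this]
  exact hin
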